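/- arXiv:2204.04015 — 2 statements merged into one kernel-verified Lean document; each statement's English description precedes it below -/
import Mathlib

section
/- Let α ≥ 0 be an integer and β > −1 a real number. For every x with 0 ≤ x < 1, the series Σ_{n=1}^{∞} ((α+β+1)_n/(n·(β+1)_n)) x^n converges and equals Σ_{ℓ=1}^{α} binom(α,ℓ) · (ℓ−1)!/((β+α+1−ℓ)_ℓ) · (1−x)^{−ℓ} − log(1−x) − (ψ(β+α+1) − ψ(β+1)). -/
open Finset Real

/-- The Pochhammer symbol `(x)_n = x (x+1) ⋯ (x+n-1)`. -/
noncomputable def poch (x : ℝ) (n : ℕ) : ℝ := (ascPochhammer ℝ n).eval x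

/-- The digamma function `ψ = Γ'/Γ`. -/
noncomputable def digamma (x : ℝ) : ℝ := deriv Real.Gamma x / Real.Gamma x

lemma poch_zero (a : ℝ) : poch a 0 = 1 := by simp [poch]
lemma poch_succ (a : ℝ) (n : ℕ) : poch a (n + 1) = poch a n * (a + n) := by
  simp [poch, ascPochhammer_succ_right]
lemma poch_one_eval (a : ℝ) : poch a 1 = a := by simp [poch]
lemma poch_pos {a : ℝ} (ha : 0 < a) (n : ℕ) : 0 < poch a n := by
  induction n with
  | zero => simp [poch_zero]
  | succ n ih => rw [poch_succ]; positivity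
lemma poch_add_right (a : ℝ) (m k : ℕ) : poch a (m + k) = poch a m * poch (a + m) k := by
  induction k with
  | zero => simp [poch_zero]
  | succ k ih =>
    rw [show m + (k + 1) = (m + k) + 1 by ring, poch_succ, ih, poch_succ]
    push_cast; ring
lemma poch_nat (m k : ℕ) : poch ((m : ℝ) + 1) k = (k.factorial : ℝ) * ((m + k).choose k) := by
  induction k with
  | zero => simp [poch_zero]
  | succ k ih =>
    rw [poch_succ, ih]
    have h2 : ((m + k + 1) * ((m + k).choose k) : ℕ) = ((m + k + 1).choose (k + 1)) * (k + 1) :=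
      Nat.add_one_mul_choose_eq (m + k) k
    have := congrArg (fun n : ℕ => (n : ℝ)) h2
    push_cast at this ⊢
    rw [show ((m:ℝ) + 1 + k) = ((m:ℝ) + k + 1) by ring]
    rw [show (m + (k+1)) = (m + k + 1) by ring]
    rw [Nat.factorial_succ]
    push_cast
    linear_combination (k.factorial:ℝ) * this
lemma poch_one_left (k : ℕ) : poch (1 : ℝ) k = (k.factorial : ℝ) := by
  have := poch_nat 0 k
  simpa using this

lemma poch_vandermonde (a b : ℝ) (n : ℕ) :
    poch (a + b) n = ∑ ℓ ∈ range (n + 1), (n.choose ℓ : ℝ) * poch a ℓ * poch b (n - ℓ) := by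
  induction n with
  | zero => simp [poch_zero]
  | succ n ih =>
    rw [poch_succ, ih]
    have key : ∀ ℓ ∈ range (n + 1),
        (n.choose ℓ : ℝ) * poch a ℓ * poch b (n - ℓ) * (a + b + n)
          = (n.choose ℓ : ℝ) * poch a (ℓ + 1) * poch b (n - ℓ)
            + (n.choose ℓ : ℝ) * poch a ℓ * poch b (n + 1 - ℓ) := by
      intro ℓ hℓ
      rw [mem_range] at hℓ
      have hℓn : ℓ ≤ n := Nat.lt_succ_iff.mp hℓ
      rw [poch_succ, show n + 1 - ℓ = (n - ℓ) + 1 by omega, poch_succ]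
      have : ((n - ℓ : ℕ) : ℝ) = (n : ℝ) - ℓ := by
        push_cast [Nat.cast_sub hℓn]; ring
      rw [this]; ring
    rw [Finset.sum_mul, Finset.sum_congr rfl key, Finset.sum_add_distrib]
    rw [Finset.sum_range_succ' (fun ℓ => ((n+1).choose ℓ : ℝ) * poch a ℓ * poch b (n + 1 - ℓ)) (n+1)]
    rw [Finset.sum_range_succ' (fun ℓ => (n.choose ℓ : ℝ) * poch a ℓ * poch b (n + 1 - ℓ)) n]
    have e1 : ∀ k : ℕ, ((n+1).choose (k+1) : ℝ) = (n.choose k : ℝ) + (n.choose (k+1) : ℝ) := by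
      intro k; rw [Nat.choose_succ_succ]; push_cast; ring
    have e2 : ∑ k ∈ range (n + 1), (n.choose k : ℝ) * poch a (k + 1) * poch b (n - k)
        = ∑ k ∈ range (n + 1), (n.choose k : ℝ) * poch a (k + 1) * poch b (n + 1 - (k + 1)) := by
      apply Finset.sum_congr rfl; intro k _; congr 2; omega
    have e3 : ∑ k ∈ range (n + 1), ((n+1).choose (k+1) : ℝ) * poch a (k+1) * poch b (n + 1 - (k+1))
        = ∑ k ∈ range (n + 1), ((n.choose k : ℝ) * poch a (k + 1) * poch b (n + 1 - (k+1))
            + (n.choose (k+1) : ℝ) * poch a (k+1) * poch b (n + 1 - (k+1))) := by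
      apply Finset.sum_congr rfl; intro k _; rw [e1]; ring
    rw [e3, Finset.sum_add_distrib, e2]
    have e4 : ∑ k ∈ range (n + 1), (n.choose (k+1) : ℝ) * poch a (k+1) * poch b (n + 1 - (k+1))
        = ∑ k ∈ range n, (n.choose (k+1) : ℝ) * poch a (k+1) * poch b (n + 1 - (k+1)) := by
      rw [Finset.sum_range_succ]; simp
    rw [e4]
    simp only [Nat.choose_zero_right, poch_zero]
    ring

/-- the "diamond" identity : `∑_k C(α,k) k! / (c+α-k)_{k+1} = 1/c`. -/
lemma poch_diamond (α : ℕ) {c : ℝ} (hc : 0 < c) :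
    ∑ k ∈ range (α + 1), (α.choose k : ℝ) * k.factorial / poch (c + α - k) (k + 1) = 1 / c := by
  have h1 : ∀ k ∈ range (α + 1),
      (α.choose k : ℝ) * k.factorial / poch (c + α - k) (k + 1)
        = (α.choose k : ℝ) * poch (1:ℝ) k * poch c (α - k) / poch c (α + 1) := by
    intro k hk
    have hkα : k ≤ α := Nat.lt_succ_iff.mp (mem_range.mp hk)
    have hsplit : poch c (α + 1) = poch c (α - k) * poch (c + α - k) (k + 1) := by
      have := poch_add_right c (α - k) (k + 1)
      rw [show (α - k) + (k + 1) = α + 1 by omega] at this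
      rw [this]
      congr 2
      rw [Nat.cast_sub hkα]; ring
    have hbase : 0 < c + (α:ℝ) - k := by
      have : (k:ℝ) ≤ α := Nat.cast_le.mpr hkα
      linarith
    have hd : 0 < poch (c + α - k) (k + 1) := poch_pos hbase _
    have he : 0 < poch c (α - k) := poch_pos hc _
    rw [hsplit, poch_one_left]
    field_simp
  rw [Finset.sum_congr rfl h1, ← Finset.sum_div]
  have hvdm := poch_vandermonde (1:ℝ) c α
  rw [← hvdm]
  have hsplit1 : poch c (α + 1) = c * poch (c + 1) α := by
    have := poch_add_right c 1 α
    rw [show 1 + α = α + 1 by ring] at this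
    rw [this, poch_one_eval]
    norm_num
  rw [hsplit1, show (1:ℝ) + c = c + 1 by ring]
  have : 0 < poch (c+1) α := poch_pos (by linarith) α
  field_simp

/-- key identity: `∑_{ℓ=1}^α C(α,ℓ)(ℓ-1)!/(c+α-ℓ)_ℓ = ∑_{j<α} 1/(c+j)` (range form). -/
lemma poch_key (α : ℕ) : ∀ c : ℝ, 0 < c →
    ∑ k ∈ range α, (α.choose (k+1) : ℝ) * k.factorial / poch (c + α - (k+1)) (k+1)
      = ∑ j ∈ range α, 1 / (c + j) := by
  induction α with
  | zero => intro c hc; simp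
  | succ α ih =>
    intro c hc
    have e0 : ∑ k ∈ range (α+1), ((α+1).choose (k+1) : ℝ) * k.factorial
          / poch (c + (α+1 : ℕ) - (k+1)) (k+1)
        = ∑ k ∈ range (α+1), ((α.choose k : ℝ) * k.factorial / poch (c + α - k) (k+1)
            + (α.choose (k+1) : ℝ) * k.factorial / poch ((c+1) + α - (k+1)) (k+1)) := by
      refine Finset.sum_congr rfl fun k _ => ?_
      rw [show (c + ((α+1 : ℕ) : ℝ) - ((k:ℝ)+1)) = c + (α:ℝ) - k by push_cast; ring]
      rw [show ((c+1) + (α:ℝ) - ((k:ℝ)+1)) = c + (α:ℝ) - k by push_cast; ring]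
      rw [Nat.choose_succ_succ]
      push_cast
      ring
    rw [e0, Finset.sum_add_distrib, poch_diamond α hc]
    have e1 : ∑ k ∈ range (α+1), (α.choose (k+1) : ℝ) * k.factorial
          / poch ((c+1) + α - (k+1)) (k+1)
        = ∑ k ∈ range α, (α.choose (k+1) : ℝ) * k.factorial / poch ((c+1) + α - (k+1)) (k+1) := by
      rw [Finset.sum_range_succ]; simp
    rw [e1, ih (c+1) (by linarith)]
    rw [Finset.sum_range_succ' (fun j => 1 / (c + (j:ℝ)))]
    push_cast
    have : ∑ j ∈ range α, 1 / (c + 1 + (j:ℝ)) = ∑ j ∈ range α, 1 / (c + ((j:ℝ) + 1)) := by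
      refine Finset.sum_congr rfl fun j _ => by ring_nf
    rw [this]
    ring

lemma digamma_add_one {t : ℝ} (ht : 0 < t) : digamma (t + 1) = digamma t + 1 / t := by
  have hd : DifferentiableAt ℝ Real.Gamma t :=
    Real.differentiableAt_Gamma fun m => by
      have : (0:ℝ) ≤ m := Nat.cast_nonneg m
      intro h; rw [h] at ht; linarith
  have hG : Real.Gamma t ≠ 0 := (Real.Gamma_pos_of_pos ht).ne'
  have hev : (fun x : ℝ => Real.Gamma (x + 1)) =ᶠ[nhds t] fun x => x * Real.Gamma x := by
    filter_upwards [eventually_ne_nhds ht.ne'] with y hy using Real.Gamma_add_one hy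
  have hderiv1 : deriv (fun x : ℝ => Real.Gamma (x + 1)) t = deriv Real.Gamma (t + 1) := by
    simpa using deriv_comp_add_const Real.Gamma 1 t
  have hmul : deriv (fun x : ℝ => x * Real.Gamma x) t
      = Real.Gamma t + t * deriv Real.Gamma t := by
    rw [deriv_fun_mul differentiableAt_fun_id hd]
    simp
  have hkey : deriv Real.Gamma (t + 1) = Real.Gamma t + t * deriv Real.Gamma t := by
    rw [← hderiv1, hev.deriv_eq, hmul]
  unfold digamma
  rw [hkey, Real.Gamma_add_one ht.ne']
  field_simp
  ring

lemma digamma_sum (α : ℕ) {β : ℝ} (hβ : -1 < β) :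
    digamma (β + α + 1) - digamma (β + 1) = ∑ j ∈ range α, 1 / (β + 1 + j) := by
  induction α with
  | zero => norm_num
  | succ α ih =>
    rw [Finset.sum_range_succ, ← ih]
    have ht : 0 < β + (α:ℝ) + 1 := by
      have : (0:ℝ) ≤ α := Nat.cast_nonneg α
      linarith
    rw [show (β + ((α+1 : ℕ):ℝ) + 1) = (β + α + 1) + 1 by push_cast; ring,
      digamma_add_one ht, show β + 1 + (α:ℝ) = β + α + 1 by ring]
    ring

lemma hasSum_poch_geom (m : ℕ) {x : ℝ} (h0 : 0 ≤ x) (h1 : x < 1) :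
    HasSum (fun n : ℕ => poch ((n:ℝ) + 2) m * x ^ (n + 1))
      ((m.factorial : ℝ) * (1 / (1 - x) ^ (m + 1)) - (m.factorial : ℝ)) := by
  have hx : ‖x‖ < 1 := by rw [Real.norm_eq_abs, abs_of_nonneg h0]; exact h1
  have H := (hasSum_choose_mul_geometric_of_norm_lt_one m hx).mul_left (m.factorial : ℝ)
  have H2 : HasSum (fun n : ℕ => (m.factorial : ℝ) * (((n + 1 + m).choose m : ℝ) * x ^ (n + 1)))
      ((m.factorial : ℝ) * (1 / (1 - x) ^ (m + 1)) - (m.factorial : ℝ)) := by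
    apply (hasSum_nat_add_iff
      (f := fun n : ℕ => (m.factorial : ℝ) * (((n + m).choose m : ℝ) * x ^ n)) 1).mpr
    simp only [Finset.sum_range_one]
    norm_num
    convert H using 1
    · rfl
    · ring
  have hfun : (fun n : ℕ => poch ((n:ℝ) + 2) m * x ^ (n + 1))
      = fun n : ℕ => (m.factorial : ℝ) * (((n + 1 + m).choose m : ℝ) * x ^ (n + 1)) := by
    funext n
    have h := poch_nat (n + 1) m
    push_cast at h
    rw [show ((n:ℝ) + 2) = ((n:ℝ) + 1 + 1) by ring, h]
    push_cast
    ring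
  rw [hfun]
  exact H2

/-- For integer `α ≥ 0` and real `β > −1`, `0 ≤ x < 1`, the series
`Σ_{n=1}^∞ ((α+β+1)_n/(n·(β+1)_n)) x^n` converges and equals
`Σ_{ℓ=1}^{α} C(α,ℓ)·(ℓ−1)!/((β+α+1−ℓ)_ℓ)·(1−x)^{−ℓ} − log(1−x) − (ψ(β+α+1) − ψ(β+1))`. -/
theorem stmt5 (α : ℕ) (β : ℝ) (hβ : -1 < β) (x : ℝ) (hx0 : 0 ≤ x) (hx1 : x < 1) :
    HasSum
      (fun n : ℕ =>
        poch ((α : ℝ) + β + 1) (n + 1) / (((n : ℝ) + 1) * poch (β + 1) (n + 1)) * x ^ (n + 1))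
      (∑ ℓ ∈ Finset.Icc 1 α,
          (α.choose ℓ : ℝ) * ((ℓ - 1).factorial : ℝ) / poch (β + α + 1 - ℓ) ℓ *
            (1 - x) ^ (-(ℓ : ℤ))
        - Real.log (1 - x) - (digamma (β + α + 1) - digamma (β + 1))) := by
  have hc : 0 < β + 1 := by linarith
  have hxabs : |x| < 1 := abs_lt.mpr ⟨by linarith, hx1⟩
  have h1x : (0:ℝ) < 1 - x := by linarith
  have hpoch : ∀ ℓ : ℕ, ℓ ≤ α → 0 < poch (β + (α:ℝ) + 1 - ℓ) ℓ := by
    intro ℓ hℓ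
    apply poch_pos
    have : (ℓ:ℝ) ≤ α := Nat.cast_le.mpr hℓ
    linarith
  set F : ℕ → ℕ → ℝ := fun ℓ n =>
    (α.choose ℓ : ℝ) / poch (β + (α:ℝ) + 1 - ℓ) ℓ * (poch ((n:ℝ) + 1) ℓ / ((n:ℝ) + 1))
      * x ^ (n + 1) with hF
  set A : ℕ → ℝ := fun ℓ =>
    if ℓ = 0 then -Real.log (1 - x) else
      (α.choose ℓ : ℝ) / poch (β + (α:ℝ) + 1 - ℓ) ℓ *
        (((ℓ - 1).factorial : ℝ) * (1 / (1 - x) ^ ℓ) - ((ℓ - 1).factorial : ℝ)) with hA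
  have hFA : ∀ ℓ ∈ range (α + 1), HasSum (F ℓ) (A ℓ) := by
    intro ℓ hℓ
    have hℓα : ℓ ≤ α := Nat.lt_succ_iff.mp (mem_range.mp hℓ)
    match ℓ with
    | 0 =>
      have hfun : F 0 = fun n : ℕ => x ^ (n + 1) / ((n:ℝ) + 1) := by
        funext n
        simp only [hF, poch_zero, Nat.choose_zero_right, Nat.cast_one, Nat.cast_zero]
        ring
      rw [hfun]
      simpa [hA] using hasSum_pow_div_log_of_abs_lt_one hxabs
    | (m + 1) =>
      have hfun : F (m + 1) = fun n : ℕ =>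
          (α.choose (m+1) : ℝ) / poch (β + (α:ℝ) + 1 - (m+1:ℕ)) (m+1)
            * (poch ((n:ℝ) + 2) m * x ^ (n + 1)) := by
        funext n
        have h2 : poch ((n:ℝ) + 1) (m + 1) = ((n:ℝ) + 1) * poch ((n:ℝ) + 2) m := by
          have := poch_add_right ((n:ℝ) + 1) 1 m
          rw [show 1 + m = m + 1 by ring] at this
          rw [this, poch_one_eval,
            show ((n:ℝ) + 1 + ((1:ℕ):ℝ)) = (n:ℝ) + 2 by push_cast; ring]
        simp only [hF]
        have hn : ((n:ℝ) + 1) ≠ 0 := by positivity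
        rw [h2, mul_comm ((n:ℝ) + 1) (poch ((n:ℝ) + 2) m), mul_div_assoc, div_self hn, mul_one]
        ring
      rw [hfun]
      have := (hasSum_poch_geom m hx0 hx1).mul_left
        ((α.choose (m+1) : ℝ) / poch (β + (α:ℝ) + 1 - (m+1:ℕ)) (m+1))
      convert this using 1
      · rfl
      · rw [hA]
        simp
  have hSum := hasSum_sum hFA
  have hpt : ∀ n : ℕ, (∑ ℓ ∈ range (α + 1), F ℓ n)
      = poch ((α:ℝ) + β + 1) (n + 1) / (((n:ℝ) + 1) * poch (β + 1) (n + 1)) * x ^ (n + 1) := by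
    intro n
    have hP : 0 < poch (β + 1) (n + 1) := poch_pos hc _
    have hQ : 0 < poch (β + 1) α := poch_pos hc _
    have hn1 : (0:ℝ) < (n:ℝ) + 1 := by positivity
    have key1 : poch ((α:ℝ) + β + 1) (n + 1) * poch (β + 1) α
        = poch (β + 1) (n + 1) * poch (((n:ℝ) + 1) + (β + 1)) α := by
      have e1 := poch_add_right (β + 1) (n + 1) α
      have e2 := poch_add_right (β + 1) α (n + 1)
      rw [show (β + 1 + ((n+1 : ℕ) : ℝ)) = ((n:ℝ) + 1) + (β + 1) by push_cast; ring] at e1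
      rw [show (β + 1 + (α : ℝ)) = (α:ℝ) + β + 1 by ring] at e2
      rw [show (n + 1) + α = α + (n + 1) by ring] at e1
      rw [e2] at e1
      linear_combination e1
    have key3 : ∀ ℓ ∈ range (α + 1),
        poch (β + 1) α = poch (β + 1) (α - ℓ) * poch (β + (α:ℝ) + 1 - ℓ) ℓ := by
      intro ℓ hℓ
      have hℓα : ℓ ≤ α := Nat.lt_succ_iff.mp (mem_range.mp hℓ)
      have := poch_add_right (β + 1) (α - ℓ) ℓ
      rw [show (α - ℓ) + ℓ = α from by omega] at this
      rw [this]
      congr 2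
      rw [Nat.cast_sub hℓα]; ring
    have step1 : ∀ ℓ ∈ range (α + 1), F ℓ n
        = (α.choose ℓ : ℝ) * poch ((n:ℝ) + 1) ℓ * poch (β + 1) (α - ℓ)
          * (x ^ (n + 1) / (poch (β + 1) α * ((n:ℝ) + 1))) := by
      intro ℓ hℓ
      have hℓα : ℓ ≤ α := Nat.lt_succ_iff.mp (mem_range.mp hℓ)
      have h3 := key3 ℓ hℓ
      have hD : 0 < poch (β + (α:ℝ) + 1 - ℓ) ℓ := hpoch ℓ hℓα
      have hE : 0 < poch (β + 1) (α - ℓ) := poch_pos hc _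
      simp only [hF]
      rw [h3]
      field_simp
    rw [Finset.sum_congr rfl step1, ← Finset.sum_mul, ← poch_vandermonde ((n:ℝ) + 1) (β + 1) α]
    rw [div_mul_eq_mul_div, ← mul_div_assoc, div_eq_div_iff (by positivity) (by positivity)]
    linear_combination (-(x ^ (n + 1)) * ((n:ℝ) + 1)) * key1
  have hfun2 : (fun n : ℕ => ∑ ℓ ∈ range (α + 1), F ℓ n)
      = fun n : ℕ =>
        poch ((α:ℝ) + β + 1) (n + 1) / (((n:ℝ) + 1) * poch (β + 1) (n + 1)) * x ^ (n + 1) :=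
    funext hpt
  rw [hfun2] at hSum
  have hval : (∑ ℓ ∈ range (α + 1), A ℓ)
      = ∑ ℓ ∈ Finset.Icc 1 α,
          (α.choose ℓ : ℝ) * ((ℓ - 1).factorial : ℝ) / poch (β + α + 1 - ℓ) ℓ *
            (1 - x) ^ (-(ℓ : ℤ))
        - Real.log (1 - x) - (digamma (β + α + 1) - digamma (β + 1)) := by
    rw [Finset.range_eq_Ico, Finset.sum_eq_sum_Ico_succ_bot (by omega : 0 < α + 1)]
    rw [Finset.Ico_add_one_right_eq_Icc]
    have hA0 : A 0 = -Real.log (1 - x) := by simp [hA]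
    have hsplit : ∀ ℓ ∈ Finset.Icc 1 α, A ℓ
        = (α.choose ℓ : ℝ) * ((ℓ - 1).factorial : ℝ) / poch (β + (α:ℝ) + 1 - ℓ) ℓ *
            (1 - x) ^ (-(ℓ : ℤ))
          - (α.choose ℓ : ℝ) * ((ℓ - 1).factorial : ℝ) / poch (β + (α:ℝ) + 1 - ℓ) ℓ := by
      intro ℓ hℓ
      have h1ℓ : 1 ≤ ℓ := (Finset.mem_Icc.mp hℓ).1
      have hℓα : ℓ ≤ α := (Finset.mem_Icc.mp hℓ).2
      have hD : 0 < poch (β + (α:ℝ) + 1 - ℓ) ℓ := hpoch ℓ hℓα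
      have hz : (1 - x) ^ (-(ℓ:ℤ)) = 1 / (1 - x) ^ ℓ := by
        rw [zpow_neg, zpow_natCast, one_div]
      simp only [hA, if_neg (by omega : ℓ ≠ 0), hz]
      field_simp
    rw [Finset.sum_congr rfl hsplit, Finset.sum_sub_distrib, hA0]
    have hdig : ∑ ℓ ∈ Finset.Icc 1 α,
        (α.choose ℓ : ℝ) * ((ℓ - 1).factorial : ℝ) / poch (β + (α:ℝ) + 1 - ℓ) ℓ
        = digamma (β + α + 1) - digamma (β + 1) := by
      rw [digamma_sum α hβ, ← poch_key α (β + 1) hc]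
      rw [← Finset.Ico_add_one_right_eq_Icc, Finset.sum_Ico_eq_sum_range]
      refine Finset.sum_congr (by norm_num) fun k _ => ?_
      rw [show 1 + k = k + 1 from by omega, show (k + 1) - 1 = k from by omega]
      rw [show (β + (α:ℝ) + 1 - ((k + 1 : ℕ):ℝ)) = (β + 1) + (α:ℝ) - ((k:ℝ) + 1) by push_cast; ring]
    rw [hdig]
    ring
  rw [hval] at hSum
  exact hSum
end

section
/- Let α, β > −1 be real, n ≥ 1 an integer, and s a real number. The function θ ↦ sin(θ)^{−s} · ( P_n^{(α+1,β)}(1)² − P_n^{(α+1,β)}(cos(2θ))² ) on (0, π/2) is integrable with respect to ν^{(α,β)} if and only if s < 2α + 4. (Since the dimension of the associated projective space is D = 2α+2, this says the expected chordal Riesz s-energy of the harmonic ensemble is finite if and only if s < D + 2.) -/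
open MeasureTheory Finset Real

/-- The Jacobi polynomial `P_n^{(α,β)}`, via its standard explicit expansion
(equivalent to Rodrigues' formula). -/
noncomputable def jacobiP (α β : ℝ) (n : ℕ) (t : ℝ) : ℝ :=
  ∑ k ∈ Finset.range (n + 1),
    poch (α + k + 1) (n - k) / ((n - k).factorial : ℝ) *
      (poch (β + (n - k) + 1) k / (k.factorial : ℝ)) *
      ((t - 1) / 2) ^ k * ((t + 1) / 2) ^ (n - k)

/-- The probability measure `ν^{(α,β)}` on `[0, π/2]` with density
`γ_{α,β}⁻¹ sin(θ)^{2α+1} cos(θ)^{2β+1}`, where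
`γ_{α,β} = Γ(α+1)Γ(β+1)/(2Γ(α+β+2))`. -/
noncomputable def nuMeasure (α β : ℝ) : Measure ℝ :=
  (volume.restrict (Set.Ioo 0 (π / 2))).withDensity fun θ =>
    ENNReal.ofReal (2 * Real.Gamma (α + β + 2) / (Real.Gamma (α + 1) * Real.Gamma (β + 1)) *
      Real.sin θ ^ (2 * α + 1) * Real.cos θ ^ (2 * β + 1))

open Topology Filter

lemma poch_pos_s10 {x : ℝ} (hx : 0 < x) (n : ℕ) : 0 < poch x n := ascPochhammer_pos n x hx

lemma continuous_jacobiP (A B : ℝ) (n : ℕ) : Continuous (fun t => jacobiP A B n t) := by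
  unfold jacobiP
  exact continuous_finset_sum _ fun k _ => by fun_prop

lemma jacobiP_one (A B : ℝ) (n : ℕ) :
    jacobiP A B n 1 = poch (A + 1) n / n.factorial := by
  unfold jacobiP
  rw [Finset.sum_eq_single 0]
  · simp [poch]
  · intro k hk hk0
    simp [zero_pow hk0]
  · intro h; simp at h

lemma jacobiP_one_pos {A : ℝ} (hA : -1 < A) (B : ℝ) (n : ℕ) : 0 < jacobiP A B n 1 := by
  rw [jacobiP_one]
  exact div_pos (poch_pos_s10 (by linarith) n) (by positivity)

/-- derivative coefficient sum -/
noncomputable def jacD (A B : ℝ) (n : ℕ) (t : ℝ) : ℝ :=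
  ∑ k ∈ Finset.range (n + 1),
    poch (A + k + 1) (n - k) / ((n - k).factorial : ℝ) *
      (poch (B + (n - k) + 1) k / (k.factorial : ℝ)) *
      ((k : ℝ) * ((t - 1) / 2) ^ (k - 1) * (1 / 2) * ((t + 1) / 2) ^ (n - k) +
        ((t - 1) / 2) ^ k * (((n - k : ℕ) : ℝ) * ((t + 1) / 2) ^ (n - k - 1) * (1 / 2)))

lemma jacobiP_hasDerivAt (A B : ℝ) (n : ℕ) (t : ℝ) :
    HasDerivAt (fun t => jacobiP A B n t) (jacD A B n t) t := by
  unfold jacobiP jacD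
  apply HasDerivAt.fun_sum
  intro k _
  have h1 : HasDerivAt (fun t : ℝ => ((t - 1) / 2) ^ k)
      ((k : ℝ) * ((t - 1) / 2) ^ (k - 1) * (1 / 2)) t := by
    have : HasDerivAt (fun t : ℝ => (t - 1) / 2) (1 / 2) t := by
      simpa using ((hasDerivAt_id t).sub_const 1).div_const 2
    simpa using this.fun_pow k
  have h2 : HasDerivAt (fun t : ℝ => ((t + 1) / 2) ^ (n - k))
      (((n - k : ℕ) : ℝ) * ((t + 1) / 2) ^ (n - k - 1) * (1 / 2)) t := by
    have : HasDerivAt (fun t : ℝ => (t + 1) / 2) (1 / 2) t := by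
      simpa using ((hasDerivAt_id t).add_const 1).div_const 2
    simpa using this.fun_pow (n - k)
  have := (h1.fun_mul h2).const_mul
    (poch (A + k + 1) (n - k) / ((n - k).factorial : ℝ) *
      (poch (B + (n - k) + 1) k / (k.factorial : ℝ)))
  simpa only [← mul_assoc] using this

lemma jacD_one_pos {A B : ℝ} (hA : -1 < A) (hB : -1 < B) {n : ℕ} (hn : 1 ≤ n) :
    0 < jacD A B n 1 := by
  unfold jacD
  apply Finset.sum_pos'
  · intro k hk
    have hc1 : 0 < poch (A + k + 1) (n - k) :=
      poch_pos_s10 (by have : (0:ℝ) ≤ (k:ℝ) := Nat.cast_nonneg k; linarith) _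
    have hc2 : 0 < poch (B + (n - k) + 1) k :=
      poch_pos_s10 (by
        have hk' : (k:ℝ) ≤ (n:ℝ) := by exact_mod_cast Nat.lt_succ_iff.mp (Finset.mem_range.mp hk)
        linarith) _
    have h3 : (0:ℝ) ≤
        ((k : ℝ) * (((1:ℝ) - 1) / 2) ^ (k - 1) * (1 / 2) * (((1:ℝ) + 1) / 2) ^ (n - k) +
          (((1:ℝ) - 1) / 2) ^ k * (((n - k : ℕ) : ℝ) * (((1:ℝ) + 1) / 2) ^ (n - k - 1) * (1 / 2))) := by
      positivity
    have h4 : (0:ℝ) ≤ poch (A + k + 1) (n - k) / ((n - k).factorial : ℝ) *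
        (poch (B + (n - k) + 1) k / (k.factorial : ℝ)) := by
      apply mul_nonneg <;> apply div_nonneg
      · exact hc1.le
      · positivity
      · exact hc2.le
      · positivity
    exact mul_nonneg h4 h3
  · refine ⟨0, by simp, ?_⟩
    have hn' : (0:ℝ) < n := by exact_mod_cast Nat.lt_of_lt_of_le Nat.zero_lt_one hn
    norm_num
    have h1 : 0 < poch (A + 1) n := poch_pos_s10 (by linarith) _
    have h2 : 0 < poch (B + ↑n + 1) 0 := poch_pos_s10 (by linarith) _
    have h3 : (0:ℝ) < n.factorial := by positivity
    positivity

noncomputable def qfun (A B : ℝ) (n : ℕ) (u : ℝ) : ℝ :=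
  jacobiP A B n 1 ^ 2 - jacobiP A B n (1 - 2 * u) ^ 2

lemma qfun_zero (A B : ℝ) (n : ℕ) : qfun A B n 0 = 0 := by simp [qfun]

lemma continuous_qfun (A B : ℝ) (n : ℕ) : Continuous (qfun A B n) := by
  unfold qfun
  have := (continuous_jacobiP A B n).comp (by fun_prop : Continuous fun u : ℝ => 1 - 2 * u)
  fun_prop

lemma qfun_hasDerivAt (A B : ℝ) (n : ℕ) :
    HasDerivAt (qfun A B n) (4 * jacobiP A B n 1 * jacD A B n 1) 0 := by
  have hinner : HasDerivAt (fun u : ℝ => 1 - 2 * u) (-2) 0 := by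
    simpa using ((hasDerivAt_id (0:ℝ)).const_mul 2).const_sub 1
  have hcomp : HasDerivAt (fun u : ℝ => jacobiP A B n (1 - 2 * u))
      (jacD A B n (1 - 2 * 0) * (-2)) 0 :=
    by have := HasDerivAt.comp 0 (jacobiP_hasDerivAt A B n (1 - 2 * 0)) hinner; exact this
  have h2 := (hcomp.fun_pow 2).const_sub (jacobiP A B n 1 ^ 2)
  unfold qfun
  refine h2.congr_deriv ?_
  norm_num
  ring

lemma qfun_deriv_pos {A B : ℝ} (hA : -1 < A) (hB : -1 < B) {n : ℕ} (hn : 1 ≤ n) :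
    0 < 4 * jacobiP A B n 1 * jacD A B n 1 := by
  have h1 := jacobiP_one_pos hA B n
  have h2 := jacD_one_pos hA hB hn
  positivity

noncomputable def Qfun (A B : ℝ) (n : ℕ) : ℝ → ℝ := fun u =>
  if u = 0 then 4 * jacobiP A B n 1 * jacD A B n 1 else qfun A B n u / u

lemma Qfun_zero (A B : ℝ) (n : ℕ) : Qfun A B n 0 = 4 * jacobiP A B n 1 * jacD A B n 1 := by
  simp [Qfun]

lemma qfun_eq_mul_Qfun (A B : ℝ) (n : ℕ) {u : ℝ} (hu : u ≠ 0) :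
    qfun A B n u = u * Qfun A B n u := by
  simp only [Qfun, if_neg hu]
  field_simp

lemma continuous_Qfun (A B : ℝ) (n : ℕ) : Continuous (Qfun A B n) := by
  rw [continuous_iff_continuousAt]
  intro x
  rcases eq_or_ne x 0 with rfl | hx
  · rw [ContinuousAt, Qfun_zero, ← nhdsNE_sup_pure, Filter.tendsto_sup]
    constructor
    · have hs := (qfun_hasDerivAt A B n)
      rw [hasDerivAt_iff_tendsto_slope] at hs
      refine hs.congr' ?_
      filter_upwards [self_mem_nhdsWithin] with u hu
      have hu' : u ≠ 0 := hu
      simp [slope_def_field, qfun_zero, Qfun, if_neg hu']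
    · have : Qfun A B n 0 = 4 * jacobiP A B n 1 * jacD A B n 1 := Qfun_zero A B n
      simpa [this] using tendsto_pure_nhds (Qfun A B n) 0
  · have hc : ContinuousAt (fun u => qfun A B n u / u) x :=
      (continuous_qfun A B n).continuousAt.div continuousAt_id hx
    refine hc.congr ?_
    filter_upwards [isOpen_compl_singleton.mem_nhds hx] with u hu
    simp [Qfun, if_neg (by exact hu : u ≠ (0:ℝ))]

lemma rpow_le_max {x m M : ℝ} (a : ℝ) (hm : 0 < m) (h1 : m ≤ x) (h2 : x ≤ M) :
    x ^ a ≤ max (m ^ a) (M ^ a) := by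
  rcases le_or_gt 0 a with h | h
  · exact le_max_of_le_right (Real.rpow_le_rpow (by linarith) h2 h)
  · exact le_max_of_le_left (Real.rpow_le_rpow_of_nonpos hm h1 h.le)

lemma min_rpow_le {x m M : ℝ} (a : ℝ) (hm : 0 < m) (h1 : m ≤ x) (h2 : x ≤ M) :
    min (m ^ a) (M ^ a) ≤ x ^ a := by
  rcases le_or_gt 0 a with h | h
  · exact min_le_of_left_le (Real.rpow_le_rpow hm.le h1 h)
  · exact min_le_of_right_le (Real.rpow_le_rpow_of_nonpos (lt_of_lt_of_le hm h1) h2 h.le)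

lemma cos_double_eq (θ : ℝ) : Real.cos (2 * θ) = 1 - 2 * Real.sin θ ^ 2 := by
  rw [Real.cos_two_mul, Real.cos_sq']
  ring

/-- integrability of `sin^a cos^b` on `(0, π/2)` when `a, b > -1`. -/
lemma integrableOn_sin_rpow_cos_rpow {a b : ℝ} (ha : -1 < a) (hb : -1 < b) :
    MeasureTheory.IntegrableOn (fun θ => Real.sin θ ^ a * Real.cos θ ^ b)
      (Set.Ioo 0 (π / 2)) := by
  have hπ := Real.pi_pos
  have hmeas : MeasureTheory.AEStronglyMeasurable
      (fun θ => Real.sin θ ^ a * Real.cos θ ^ b)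
      (MeasureTheory.volume.restrict (Set.Ioo (0:ℝ) (π/3)) ) := by
    apply Measurable.aestronglyMeasurable; measurability
  have hmeas2 : MeasureTheory.AEStronglyMeasurable
      (fun θ => Real.sin θ ^ a * Real.cos θ ^ b)
      (MeasureTheory.volume.restrict (Set.Ioo (π/4) (π/2)) ) := by
    apply Measurable.aestronglyMeasurable; measurability
  have hsub : Set.Ioo (0:ℝ) (π/2) ⊆ Set.Ioo 0 (π/3) ∪ Set.Ioo (π/4) (π/2) := by
    intro θ hθ
    rcases lt_or_ge θ (π/3) with h | h
    · exact Or.inl ⟨hθ.1, h⟩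
    · exact Or.inr ⟨by nlinarith [hθ.1, hθ.2], hθ.2⟩
  refine MeasureTheory.IntegrableOn.mono_set (MeasureTheory.IntegrableOn.union ?_ ?_) hsub
  · -- near 0
    set K₁ := max ((2/π) ^ a) 1 with hK₁
    set K₂ := max ((1/2 : ℝ) ^ b) 1 with hK₂
    have hK₁0 : 0 ≤ K₁ := le_trans zero_le_one (le_max_right _ _)
    have hK₂0 : 0 ≤ K₂ := le_trans zero_le_one (le_max_right _ _)
    have hg : MeasureTheory.IntegrableOn (fun θ : ℝ => K₁ * K₂ * θ ^ a)
        (Set.Ioo (0:ℝ) (π/3)) :=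
      ((intervalIntegral.integrableOn_Ioo_rpow_iff (by positivity)).mpr ha).const_mul _
    refine hg.mono' hmeas ?_
    filter_upwards [MeasureTheory.ae_restrict_mem measurableSet_Ioo] with θ hθ
    have h0 : 0 < θ := hθ.1
    have hlt : θ < π/3 := hθ.2
    have hsinpos : 0 < Real.sin θ := Real.sin_pos_of_pos_of_lt_pi h0 (by linarith)
    have hcospos : 0 < Real.cos θ := Real.cos_pos_of_mem_Ioo ⟨by linarith, by linarith⟩
    rw [Real.norm_eq_abs, abs_of_nonneg (by positivity)]
    have hsin_le : Real.sin θ ^ a ≤ K₁ * θ ^ a := by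
      have h1 : 2/π * θ ≤ Real.sin θ := Real.mul_le_sin h0.le (by linarith)
      have h2 : Real.sin θ ≤ θ := (Real.sin_lt h0).le
      calc Real.sin θ ^ a ≤ max ((2/π * θ) ^ a) (θ ^ a) :=
            rpow_le_max a (by positivity) h1 h2
        _ = max ((2/π) ^ a * θ ^ a) (1 * θ ^ a) := by
            rw [Real.mul_rpow (by positivity) h0.le, one_mul]
        _ = K₁ * θ ^ a := by rw [hK₁, max_mul_of_nonneg _ _ (by positivity : (0:ℝ) ≤ θ ^ a)]
    have hcos_le : Real.cos θ ^ b ≤ K₂ := by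
      have h1 : (1/2 : ℝ) ≤ Real.cos θ := by
        rw [show (1/2 : ℝ) = Real.cos (π/3) by rw [Real.cos_pi_div_three]]
        exact (Real.strictAntiOn_cos.le_iff_ge (Set.mem_Icc.mpr ⟨by positivity, by linarith⟩)
          (Set.mem_Icc.mpr ⟨h0.le, by linarith⟩)).mpr hlt.le
      have h2 : Real.cos θ ≤ 1 := Real.cos_le_one θ
      calc Real.cos θ ^ b ≤ max ((1/2:ℝ) ^ b) (1 ^ b) := rpow_le_max b one_half_pos h1 h2
        _ = K₂ := by rw [Real.one_rpow]
    calc Real.sin θ ^ a * Real.cos θ ^ b ≤ (K₁ * θ ^ a) * K₂ :=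
          mul_le_mul hsin_le hcos_le (by positivity) (by positivity)
      _ = K₁ * K₂ * θ ^ a := by ring
  · -- near π/2
    set K₃ := max ((Real.sqrt 2 / 2) ^ a) 1 with hK₃
    set K₄ := max ((2/π) ^ b) 1 with hK₄
    have hK₃0 : 0 ≤ K₃ := le_trans zero_le_one (le_max_right _ _)
    have hK₄0 : 0 ≤ K₄ := le_trans zero_le_one (le_max_right _ _)
    have hg : MeasureTheory.IntegrableOn (fun θ : ℝ => K₃ * K₄ * (π/2 - θ) ^ b)
        (Set.Ioo (π/4) (π/2)) := by
      have h1 : IntervalIntegrable (fun x : ℝ => x ^ b) MeasureTheory.volume 0 (π/4) :=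
        intervalIntegral.intervalIntegrable_rpow' hb
      have h2 := h1.comp_sub_left (π/2)
      norm_num at h2
      have h4 : π/2 - π/4 = π/4 := by ring
      rw [h4] at h2
      have h3 : MeasureTheory.IntegrableOn (fun x : ℝ => (π/2 - x) ^ b)
          (Set.Ioo (π/4) (π/2)) := by
        rw [← intervalIntegrable_iff_integrableOn_Ioo_of_le (by linarith)]
        exact h2.symm
      exact h3.const_mul _
    refine hg.mono' hmeas2 ?_
    filter_upwards [MeasureTheory.ae_restrict_mem measurableSet_Ioo] with θ hθ
    have h0 : π/4 < θ := hθ.1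
    have hlt : θ < π/2 := hθ.2
    have hθpos : 0 < θ := by linarith
    have hsinpos : 0 < Real.sin θ := Real.sin_pos_of_pos_of_lt_pi hθpos (by linarith)
    have hcospos : 0 < Real.cos θ := Real.cos_pos_of_mem_Ioo ⟨by linarith, hlt⟩
    rw [Real.norm_eq_abs, abs_of_nonneg (by positivity)]
    have hsin_le : Real.sin θ ^ a ≤ K₃ := by
      have h1 : Real.sqrt 2 / 2 ≤ Real.sin θ := by
        rw [show Real.sqrt 2 / 2 = Real.sin (π/4) by rw [Real.sin_pi_div_four]]
        exact (Real.strictMonoOn_sin.le_iff_le ⟨by linarith, by linarith⟩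
          ⟨by linarith, by linarith⟩).mpr h0.le
      have h2 : Real.sin θ ≤ 1 := Real.sin_le_one θ
      calc Real.sin θ ^ a ≤ max ((Real.sqrt 2 / 2) ^ a) (1 ^ a) :=
            rpow_le_max a (by positivity) h1 h2
        _ = K₃ := by rw [Real.one_rpow]
    have hcos_le : Real.cos θ ^ b ≤ K₄ * (π/2 - θ) ^ b := by
      have hx : 0 < π/2 - θ := by linarith
      have h1 : 2/π * (π/2 - θ) ≤ Real.cos θ := by
        rw [← Real.sin_pi_div_two_sub]
        exact Real.mul_le_sin hx.le (by linarith)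
      have h2 : Real.cos θ ≤ π/2 - θ := by
        rw [← Real.sin_pi_div_two_sub]
        exact (Real.sin_lt hx).le
      calc Real.cos θ ^ b ≤ max ((2/π * (π/2 - θ)) ^ b) ((π/2 - θ) ^ b) :=
            rpow_le_max b (by positivity) h1 h2
        _ = max ((2/π) ^ b * (π/2 - θ) ^ b) (1 * (π/2 - θ) ^ b) := by
            rw [Real.mul_rpow (by positivity) hx.le, one_mul]
        _ = K₄ * (π/2 - θ) ^ b := by
            rw [hK₄, max_mul_of_nonneg _ _ (by positivity : (0:ℝ) ≤ (π/2 - θ) ^ b)]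
    calc Real.sin θ ^ a * Real.cos θ ^ b ≤ K₃ * (K₄ * (π/2 - θ) ^ b) :=
          mul_le_mul hsin_le hcos_le (by positivity) (by positivity)
      _ = K₃ * K₄ * (π/2 - θ) ^ b := by ring

lemma keylemma {Q : ℝ → ℝ} (hQ : Continuous Q) (hQ0 : 0 < Q 0) {c a b : ℝ}
    (hc : 0 < c) (hb : -1 < b) :
    MeasureTheory.IntegrableOn
      (fun θ => c * (Real.sin θ ^ a * Real.cos θ ^ b * Q (Real.sin θ ^ 2)))
      (Set.Ioo 0 (π / 2)) ↔ -1 < a := by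
  have hπ := Real.pi_pos
  have hφm : Measurable fun θ : ℝ => Q (Real.sin θ ^ 2) :=
    hQ.measurable.comp (by measurability)
  have hsc : Measurable fun θ : ℝ => Real.sin θ ^ a * Real.cos θ ^ b := by measurability
  constructor
  · intro hF
    by_contra hcon
    push_neg at hcon
    have hev : ∀ᶠ θ in 𝓝 (0:ℝ), Q 0 / 2 < Q (Real.sin θ ^ 2) := by
      have hcont : ContinuousAt (fun θ : ℝ => Q (Real.sin θ ^ 2)) 0 :=
        (hQ.comp (by fun_prop : Continuous fun θ : ℝ => Real.sin θ ^ 2)).continuousAt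
      have h0 : (fun θ : ℝ => Q (Real.sin θ ^ 2)) 0 = Q 0 := by norm_num
      have := hcont.eventually (eventually_gt_nhds (by rw [h0]; linarith :
        Q 0 / 2 < (fun θ : ℝ => Q (Real.sin θ ^ 2)) 0))
      exact this
    obtain ⟨δ, hδpos, hδ⟩ := Metric.eventually_nhds_iff.mp hev
    set δ' := min δ (π/4) with hδ'
    have hδ'pos : 0 < δ' := lt_min hδpos (by positivity)
    have hsub : Set.Ioo (0:ℝ) δ' ⊆ Set.Ioo 0 (π/2) := by
      apply Set.Ioo_subset_Ioo le_rfl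
      calc δ' ≤ π/4 := min_le_right _ _
        _ ≤ π/2 := by linarith
    set m0 := min ((1/2:ℝ) ^ b) 1 with hm0def
    have hm0 : 0 < m0 := lt_min (by positivity) one_pos
    set c' := c * (m0 * (Q 0 / 2)) with hc'def
    have hc' : 0 < c' := by positivity
    have hint : MeasureTheory.IntegrableOn (fun θ : ℝ => θ ^ a) (Set.Ioo 0 δ') := by
      refine ((hF.mono_set hsub).const_mul c'⁻¹).mono'
        (by measurability : Measurable fun θ : ℝ => θ ^ a).aestronglyMeasurable ?_
      filter_upwards [MeasureTheory.ae_restrict_mem measurableSet_Ioo] with θ hθ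
      obtain ⟨h0, h1⟩ := hθ
      have hθπ : θ < π/4 := lt_of_lt_of_le h1 (min_le_right _ _)
      have hsin : 0 < Real.sin θ := Real.sin_pos_of_pos_of_lt_pi h0 (by linarith)
      have hcos12 : 1/2 ≤ Real.cos θ := by
        rw [show (1/2 : ℝ) = Real.cos (π/3) by rw [Real.cos_pi_div_three]]
        exact (Real.strictAntiOn_cos.le_iff_ge (Set.mem_Icc.mpr ⟨by positivity, by linarith⟩)
          (Set.mem_Icc.mpr ⟨h0.le, by linarith⟩)).mpr (by linarith)
      have hcosb : m0 ≤ Real.cos θ ^ b := by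
        have := min_rpow_le b one_half_pos hcos12 (Real.cos_le_one θ)
        rwa [Real.one_rpow] at this
      have hQθ : Q 0 / 2 < Q (Real.sin θ ^ 2) := by
        apply hδ
        rw [Real.dist_eq, sub_zero, abs_of_pos h0]
        exact lt_of_lt_of_le h1 (min_le_left _ _)
      have hta : θ ^ a ≤ Real.sin θ ^ a :=
        Real.rpow_le_rpow_of_nonpos hsin (Real.sin_lt h0).le (by linarith)
      rw [Real.norm_eq_abs, abs_of_nonneg (Real.rpow_nonneg h0.le a)]
      have key : c' * θ ^ a ≤ c * (Real.sin θ ^ a * Real.cos θ ^ b * Q (Real.sin θ ^ 2)) := by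
        have e1 : c' * θ ^ a = c * (θ ^ a * (m0 * (Q 0 / 2))) := by ring
        rw [e1]
        apply mul_le_mul_of_nonneg_left ?_ hc.le
        have inner : m0 * (Q 0 / 2) ≤ Real.cos θ ^ b * Q (Real.sin θ ^ 2) :=
          mul_le_mul hcosb hQθ.le (by positivity) (Real.rpow_nonneg (by linarith) b)
        calc θ ^ a * (m0 * (Q 0 / 2))
            ≤ Real.sin θ ^ a * (Real.cos θ ^ b * Q (Real.sin θ ^ 2)) :=
              mul_le_mul hta inner (by positivity) (Real.rpow_nonneg hsin.le a)
          _ = Real.sin θ ^ a * Real.cos θ ^ b * Q (Real.sin θ ^ 2) := by ring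
      calc θ ^ a = c'⁻¹ * (c' * θ ^ a) := by field_simp
        _ ≤ c'⁻¹ * (c * (Real.sin θ ^ a * Real.cos θ ^ b * Q (Real.sin θ ^ 2))) :=
            mul_le_mul_of_nonneg_left key (by positivity)
    have := (intervalIntegral.integrableOn_Ioo_rpow_iff hδ'pos).mp hint
    linarith
  · intro ha
    obtain ⟨M, hM⟩ := (isCompact_Icc (a := (0:ℝ)) (b := π/2)).exists_bound_of_continuousOn
      (hQ.comp (by fun_prop : Continuous fun θ : ℝ => Real.sin θ ^ 2)).continuousOn
    have hM0 : 0 ≤ M := le_trans (norm_nonneg _) (hM 0 ⟨le_refl 0, by positivity⟩)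
    refine ((integrableOn_sin_rpow_cos_rpow ha hb).const_mul (c * M)).mono'
      (((hsc.mul hφm).const_mul c).aestronglyMeasurable) ?_
    filter_upwards [MeasureTheory.ae_restrict_mem measurableSet_Ioo] with θ hθ
    have hsin : 0 < Real.sin θ := Real.sin_pos_of_pos_of_lt_pi hθ.1 (by linarith [hθ.2])
    have hcos : 0 < Real.cos θ := Real.cos_pos_of_mem_Ioo ⟨by linarith [hθ.1], hθ.2⟩
    have hQb : ‖Q (Real.sin θ ^ 2)‖ ≤ M := by
      have := hM θ ⟨hθ.1.le, hθ.2.le⟩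
      simpa using this
    calc ‖c * (Real.sin θ ^ a * Real.cos θ ^ b * Q (Real.sin θ ^ 2))‖
        = c * (Real.sin θ ^ a * Real.cos θ ^ b * ‖Q (Real.sin θ ^ 2)‖) := by
          rw [norm_mul, norm_mul, Real.norm_eq_abs c, abs_of_pos hc,
            Real.norm_eq_abs (Real.sin θ ^ a * Real.cos θ ^ b),
            abs_of_nonneg (by positivity), Real.norm_eq_abs]
      _ ≤ c * (Real.sin θ ^ a * Real.cos θ ^ b * M) := by
          apply mul_le_mul_of_nonneg_left ?_ hc.le
          exact mul_le_mul_of_nonneg_left hQb (by positivity)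
      _ = c * M * (Real.sin θ ^ a * Real.cos θ ^ b) := by ring

/-- The expected chordal Riesz `s`-energy of the harmonic ensemble is finite
iff `s < D + 2 = 2α + 4`. -/
theorem stmt10 (α β : ℝ) (hα : -1 < α) (hβ : -1 < β) (n : ℕ) (hn : 1 ≤ n) (s : ℝ) :
    MeasureTheory.Integrable
        (fun θ => Real.sin θ ^ (-s) *
          (jacobiP (α + 1) β n 1 ^ 2 - jacobiP (α + 1) β n (Real.cos (2 * θ)) ^ 2))
        (nuMeasure α β)
      ↔ s < 2 * α + 4 := by
  have hπ := Real.pi_pos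
  set c : ℝ := 2 * Real.Gamma (α + β + 2) / (Real.Gamma (α + 1) * Real.Gamma (β + 1)) with hcdef
  have hc : 0 < c := by
    apply div_pos
    · have := Real.Gamma_pos_of_pos (show (0:ℝ) < α + β + 2 by linarith)
      linarith
    · exact mul_pos (Real.Gamma_pos_of_pos (by linarith)) (Real.Gamma_pos_of_pos (by linarith))
  have hA : -1 < α + 1 := by linarith
  have hQcont := continuous_Qfun (α + 1) β n
  have hQ0 : 0 < Qfun (α + 1) β n 0 := by
    rw [Qfun_zero]; exact qfun_deriv_pos hA hβ hn
  rw [nuMeasure, integrable_withDensity_iff (by measurability)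
    (Filter.Eventually.of_forall fun x => ENNReal.ofReal_lt_top)]
  have aeeq : (fun θ => Real.sin θ ^ (-s) *
          (jacobiP (α + 1) β n 1 ^ 2 - jacobiP (α + 1) β n (Real.cos (2 * θ)) ^ 2) *
          (ENNReal.ofReal (c * Real.sin θ ^ (2 * α + 1) * Real.cos θ ^ (2 * β + 1))).toReal)
      =ᵐ[MeasureTheory.volume.restrict (Set.Ioo 0 (π / 2))]
      (fun θ => c * (Real.sin θ ^ (2 * α + 3 - s) * Real.cos θ ^ (2 * β + 1) *
        Qfun (α + 1) β n (Real.sin θ ^ 2))) := by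
    filter_upwards [MeasureTheory.ae_restrict_mem measurableSet_Ioo] with θ hθ
    have hsin : 0 < Real.sin θ := Real.sin_pos_of_pos_of_lt_pi hθ.1 (by linarith [hθ.2])
    have hcos : 0 < Real.cos θ := Real.cos_pos_of_mem_Ioo ⟨by linarith [hθ.1], hθ.2⟩
    rw [ENNReal.toReal_ofReal (by positivity), cos_double_eq θ]
    have hq : jacobiP (α + 1) β n 1 ^ 2 - jacobiP (α + 1) β n (1 - 2 * Real.sin θ ^ 2) ^ 2
        = Real.sin θ ^ 2 * Qfun (α + 1) β n (Real.sin θ ^ 2) :=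
      qfun_eq_mul_Qfun _ _ _ (by positivity)
    rw [hq]
    have hxx : Real.sin θ ^ (-s) * Real.sin θ ^ (2:ℕ) * Real.sin θ ^ (2 * α + 1)
        = Real.sin θ ^ (2 * α + 3 - s) := by
      rw [← Real.rpow_natCast (Real.sin θ) 2, ← Real.rpow_add hsin, ← Real.rpow_add hsin]
      congr 1
      push_cast
      ring
    linear_combination (c * Real.cos θ ^ (2 * β + 1) * Qfun (α + 1) β n (Real.sin θ ^ 2)) * hxx
  rw [MeasureTheory.integrable_congr aeeq]
  have hiff := keylemma hQcont hQ0 hc (show (-1:ℝ) < 2 * β + 1 by linarith)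
    (a := 2 * α + 3 - s)
  exact hiff.trans ⟨fun h => by linarith, fun h => by linarith⟩
end
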